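/- Let a, a', b, b' be complex numbers. The polynomial identity (∂+λ+2μ)(∂+aλ+b) = (∂+2λ+2μ)((a'-1)λ-μ+b') + (∂+2μ)(∂+a'λ+μ+b') holds in ℂ[∂,λ,μ] if and only if a' = a/2 + 1 and b' = b/2. -/
import Mathlib

/-- The Jacobi-identity condition for CSV(a,b): the polynomial identity
(∂+λ+2μ)(∂+aλ+b) = (∂+2λ+2μ)((a'-1)λ-μ+b') + (∂+2μ)(∂+a'λ+μ+b') holds in ℂ[∂,λ,μ]
iff a' = a/2 + 1 and b' = b/2. -/
theorem stmt0 (a a' b b' : ℂ) :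
    (∀ d l m : ℂ,
      (d + l + 2*m) * (d + a*l + b) =
        (d + 2*l + 2*m) * ((a' - 1)*l - m + b') + (d + 2*m) * (d + a'*l + m + b'))
      ↔ (a' = a/2 + 1 ∧ b' = b/2) := by
  constructor
  · intro h
    have h1 := h 1 0 0
    have h2 := h 1 1 0
    constructor
    · linear_combination h1/2 - h2/4
    · linear_combination -h1/2
  · rintro ⟨rfl, rfl⟩ d l m
    ring
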